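/- arXiv:0909.4342 — 2 statements merged into one kernel-verified Lean document; each statement's English description precedes it below -/
import Mathlib

section
/- Let M be a connected lattice path matroid with at least two elements. Fix a path order of M and let (J_1,…,J_r) with J_i = [a_i, b_i] be the corresponding interval presentation. If an element x ∈ E(M) lies in at least two of the sets J_1,…,J_r, or if x ∈ {a_1, b_r}, then x lies in a spanning circuit of M. -/
open Matroid Set

namespace Matroid

variable {α : Type*}

/-- Deletion of a set of elements from a matroid. -/
def del (M : Matroid α) (D : Set α) : Matroid α := M ↾ (M.E \ D)

/-- Contraction of a set of elements, defined via duality: `M ／ C = (M✶ ＼ C)✶`. -/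
def con (M : Matroid α) (C : Set α) : Matroid α := (M✶.del C)✶

/-- `N` is a minor of `M` if `N` arises from `M` by a contraction followed by a deletion. -/
def IsMinorOf (N M : Matroid α) : Prop :=
  ∃ C D : Set α, Disjoint C D ∧ N = (M.con C).del D

/-- A circuit is a minimal dependent set. -/
def IsCircuit' (M : Matroid α) (C : Set α) : Prop :=
  M.Dep C ∧ ∀ D, M.Dep D → D ⊆ C → D = C

/-- A spanning circuit is a circuit whose closure is the ground set. -/
def IsSpanningCircuit (M : Matroid α) (C : Set α) : Prop :=
  M.IsCircuit' C ∧ M.Spanning C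

/-- Two elements of a matroid are connected if they are equal or lie on a common circuit. -/
def ConnTo (M : Matroid α) (x y : α) : Prop :=
  (x = y ∧ x ∈ M.E) ∨ ∃ C, M.IsCircuit' C ∧ x ∈ C ∧ y ∈ C

/-- A matroid is connected if its ground set is nonempty and every two elements of the
ground set are connected. -/
def IsConnected (M : Matroid α) : Prop :=
  M.E.Nonempty ∧ ∀ ⦃x y : α⦄, x ∈ M.E → y ∈ M.E → M.ConnTo x y

/-- A loop: an element whose singleton is dependent. -/
def IsLoop' (M : Matroid α) (x : α) : Prop := x ∈ M.E ∧ ¬ M.Indep {x}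

/-- The rank of a set `X` in a matroid: the maximum cardinality of an independent
subset of `X` (for finite matroids). -/
noncomputable def rkOf (M : Matroid α) (X : Set α) : ℕ :=
  sSup {k | ∃ I ⊆ X, M.Indep I ∧ I.ncard = k}

/-- The nullity of a set `X`: `η(X) = |X| − r(X)`. -/
noncomputable def etaOf (M : Matroid α) (X : Set α) : ℕ := X.ncard - M.rkOf X

/-- A flat is connected if the corresponding restriction is a connected matroid. -/
def ConnectedFlat (M : Matroid α) (F : Set α) : Prop :=
  M.IsFlat F ∧ (M ↾ F).IsConnected

/-- A pnc-flat: a proper nontrivial (i.e. dependent) connected flat. -/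
def PncFlat (M : Matroid α) (F : Set α) : Prop :=
  M.IsFlat F ∧ F ⊂ M.E ∧ M.Dep F ∧ (M ↾ F).IsConnected

/-- A fundamental flat: a pnc-flat `F` such that `F ∩ C` is a basis of `F`
for some spanning circuit `C` of the matroid. -/
def FundFlat (M : Matroid α) (F : Set α) : Prop :=
  M.PncFlat F ∧ ∃ C, M.IsSpanningCircuit C ∧ M.IsBasis (F ∩ C) F

end Matroid

/-- `X` is a partial transversal of the family `J`. -/
def IsPartialTransversal {α : Type*} {r : ℕ} (J : Fin r → Set α) (X : Set α) : Prop :=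
  ∃ f : α → Fin r, Set.InjOn f X ∧ ∀ x ∈ X, x ∈ J (f x)

/-- The family `J` is a presentation of the transversal matroid `M`: a set `X ⊆ E(M)` is
independent in `M` iff it is a partial transversal of `J`. -/
def IsPresentationOf {α : Type*} {r : ℕ} (J : Fin r → Set α) (M : Matroid α) : Prop :=
  (∀ i, J i ⊆ M.E) ∧ ∀ X ⊆ M.E, (M.Indep X ↔ IsPartialTransversal J X)

/-- An interval presentation of `M` with respect to a path order: `e` enumerates the ground
set in the path order, and the presentation consists of the intervals `[a i, b i]`, where
the `a i` are strictly increasing, the `b i` are strictly increasing and `a i ≤ b i`. -/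
structure IntervalPres {α : Type*} (M : Matroid α) (n r : ℕ) where
  e : Fin n → α
  inj : Function.Injective e
  ground : Set.range e = M.E
  a : Fin r → Fin n
  b : Fin r → Fin n
  ha : StrictMono a
  hb : StrictMono b
  hab : ∀ i, a i ≤ b i
  pres : IsPresentationOf (fun i => e '' Set.Icc (a i) (b i)) M

/-- The `i`-th interval of an interval presentation. -/
def IntervalPres.J {α : Type*} {M : Matroid α} {n r : ℕ}
    (P : IntervalPres M n r) (i : Fin r) : Set α :=
  P.e '' Set.Icc (P.a i) (P.b i)

/-- A lattice path matroid: a matroid admitting an interval presentation. -/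
def IsLPM {α : Type*} (M : Matroid α) : Prop :=
  ∃ n r : ℕ, Nonempty (IntervalPres M n r)

/-- A terminal element: one that is least or greatest in some path order. -/
def IsTerminal {α : Type*} (M : Matroid α) (x : α) : Prop :=
  ∃ (n r : ℕ) (P : IntervalPres M n r) (i : Fin n),
    P.e i = x ∧ (i.1 = 0 ∨ i.1 = n - 1)

/-- A nested matroid: a lattice path matroid with an interval presentation in which the set
of lower endpoints, or the set of upper endpoints, is an interval in the path order. -/
def IsNested {α : Type*} (M : Matroid α) : Prop :=
  ∃ (n r : ℕ) (P : IntervalPres M n r),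
    (Set.range P.a).OrdConnected ∨ (Set.range P.b).OrdConnected

/-- `M` is (isomorphic to) the uniform matroid `U_{r,k}`: `k` elements, and the independent
sets are exactly the subsets of the ground set with at most `r` elements. -/
def IsUniformOf {α : Type*} (M : Matroid α) (r k : ℕ) : Prop :=
  M.E.Finite ∧ M.E.ncard = k ∧ ∀ I ⊆ M.E, (M.Indep I ↔ I.ncard ≤ r)

/-- `M` is (isomorphic to) an `n`-element circuit `U_{n-1,n}`. -/
def IsCircuitMatroidOf {α : Type*} (M : Matroid α) (n : ℕ) : Prop :=
  IsUniformOf M (n - 1) n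

/-- `N` is the truncation of `M` to rank `k`. -/
def IsTruncationOf {α : Type*} (N M : Matroid α) (k : ℕ) : Prop :=
  N.E = M.E ∧ ∀ I, N.Indep I ↔ (M.Indep I ∧ I.ncard ≤ k)

/-- `N` is the direct sum of `M₁` and `M₂`. -/
def IsDirectSumOf {α : Type*} (N M₁ M₂ : Matroid α) : Prop :=
  Disjoint M₁.E M₂.E ∧ N.E = M₁.E ∪ M₂.E ∧
    ∀ I, N.Indep I ↔ (I ⊆ N.E ∧ M₁.Indep (I ∩ M₁.E) ∧ M₂.Indep (I ∩ M₂.E))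

/-- `N` is the parallel connection `P_x(M₁, M₂)`, described by its bases. -/
def IsParallelConnOf {α : Type*} (N M₁ M₂ : Matroid α) (x : α) : Prop :=
  M₁.E ∩ M₂.E = {x} ∧ ¬ (M₁.IsLoop' x ∧ M₂.IsLoop' x) ∧ N.E = M₁.E ∪ M₂.E ∧
    ∀ B, N.IsBase B ↔
      ((x ∈ B ∧ M₁.IsBase (B ∩ M₁.E) ∧ M₂.IsBase (B ∩ M₂.E)) ∨
       (x ∉ B ∧ ((M₁.IsBase (B ∩ M₁.E) ∧ M₂.IsBase ((B ∩ M₂.E) ∪ {x})) ∨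
                 (M₂.IsBase (B ∩ M₂.E) ∧ M₁.IsBase ((B ∩ M₁.E) ∪ {x})))))

/-- `N` is the free extension `M + x` of `M` by the element `x`. -/
def IsFreeExtOf {α : Type*} (N M : Matroid α) (x : α) : Prop :=
  x ∉ M.E ∧ N.E = insert x M.E ∧
    ∀ I, N.Indep I ↔ (I ⊆ N.E ∧ ((x ∉ I ∧ M.Indep I) ∨
        (x ∈ I ∧ M.Indep (I \ {x}) ∧ ¬ M.Spanning (I \ {x}))))

/-- `M` is (isomorphic to) `P_m`, the truncation to rank `m` of the direct sum of two
`m`-element circuits. -/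
def IsPMat {α : Type*} (M : Matroid α) (m : ℕ) : Prop :=
  ∃ U₁ U₂ S : Matroid α, IsCircuitMatroidOf U₁ m ∧ IsCircuitMatroidOf U₂ m ∧
    IsDirectSumOf S U₁ U₂ ∧ IsTruncationOf M S m

/-- `M` is (isomorphic to) `P'_n`, the truncation to rank `n` of the parallel connection,
at a common element, of two `n`-element circuits. -/
def IsP'Mat {α : Type*} (M : Matroid α) (n : ℕ) : Prop :=
  ∃ (U₁ U₂ S : Matroid α) (x : α), IsCircuitMatroidOf U₁ n ∧ IsCircuitMatroidOf U₂ n ∧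
    IsParallelConnOf S U₁ U₂ x ∧ IsTruncationOf M S n

/-- `M` is (isomorphic to) `A_n = P'_n + x`. -/
def IsAMat {α : Type*} (M : Matroid α) (n : ℕ) : Prop :=
  ∃ (N : Matroid α) (x : α), IsP'Mat N n ∧ IsFreeExtOf M N x

/-- `M` is (isomorphic to) `B_{n,k} = T_n(U_{n-1,n} ⊕ U_{n-1,n} ⊕ U_{k-1,k})`. -/
def IsBMat {α : Type*} (M : Matroid α) (n k : ℕ) : Prop :=
  ∃ U₁ U₂ U₃ S₁ S₂ : Matroid α, IsCircuitMatroidOf U₁ n ∧ IsCircuitMatroidOf U₂ n ∧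
    IsUniformOf U₃ (k - 1) k ∧ IsDirectSumOf S₁ U₁ U₂ ∧ IsDirectSumOf S₂ S₁ U₃ ∧
    IsTruncationOf M S₂ n

/-- `M` is (isomorphic to) `C_{n+k,k}`, the dual of `B_{n,k}`. -/
def IsCMat {α : Type*} (M : Matroid α) (n k : ℕ) : Prop := IsBMat M✶ n k

/-- `M` is (isomorphic to) `D_n = (P_{n-1} ⊕ U_{1,1}) + x`. -/
def IsDMat {α : Type*} (M : Matroid α) (n : ℕ) : Prop :=
  ∃ (P U S : Matroid α) (x : α), IsPMat P (n - 1) ∧ IsUniformOf U 1 1 ∧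
    IsDirectSumOf S P U ∧ IsFreeExtOf M S x

/-- `M` is (isomorphic to) `E_n`, the dual of `D_n`. -/
def IsEMat {α : Type*} (M : Matroid α) (n : ℕ) : Prop := IsDMat M✶ n

/-- `M` is (isomorphic to) the rank-3 wheel `W_3`, the cycle matroid of `K₄`: six elements,
rank 3, whose dependent 3-sets are the four triangles of `K₄`. -/
def IsWheel3 {α : Type*} (M : Matroid α) : Prop :=
  ∃ a b c d e f : α, ({a, b, c, d, e, f} : Set α).ncard = 6 ∧
    M.E = {a, b, c, d, e, f} ∧
    ∀ X ⊆ M.E, (M.Indep X ↔ X.ncard ≤ 3 ∧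
      X ≠ {a, b, f} ∧ X ≠ {a, c, e} ∧ X ≠ {b, c, d} ∧ X ≠ {d, e, f})

/-- `M` is (isomorphic to) the rank-3 whirl `W^3`, obtained from `W_3` by relaxing a
circuit-hyperplane: six elements, rank 3, with exactly three dependent 3-sets. -/
def IsWhirl3 {α : Type*} (M : Matroid α) : Prop :=
  ∃ a b c d e f : α, ({a, b, c, d, e, f} : Set α).ncard = 6 ∧
    M.E = {a, b, c, d, e, f} ∧
    ∀ X ⊆ M.E, (M.Indep X ↔ X.ncard ≤ 3 ∧
      X ≠ {a, b, f} ∧ X ≠ {a, c, e} ∧ X ≠ {b, c, d})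

/-- `M` is (isomorphic to) `R_4`: the parallel extension, at `x`, of the rank-4 matroid on
six elements whose ground set is the union of two 4-element circuits `{x,y,p,q}` and
`{x,y,u,v}` meeting in the independent set `{x,y}`, these circuits being its only
nonspanning circuits. -/
def IsR4Mat {α : Type*} (M : Matroid α) : Prop :=
  ∃ (S U : Matroid α) (x x' y p q u v : α),
    ({x, x', y, p, q, u, v} : Set α).ncard = 7 ∧
    S.E = {x, y, p, q, u, v} ∧
    (∀ X ⊆ S.E, (S.Indep X ↔ X.ncard ≤ 4 ∧
        ¬ ({x, y, p, q} : Set α) ⊆ X ∧ ¬ ({x, y, u, v} : Set α) ⊆ X)) ∧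
    U.E = {x, x'} ∧ (∀ B, U.IsBase B ↔ (B = {x} ∨ B = {x'})) ∧
    IsParallelConnOf M S U x

/-- `M` is (isomorphic to) `R_3`, the dual of `R_4`. -/
def IsR3Mat {α : Type*} (M : Matroid α) : Prop := IsR4Mat M✶

/-- `M` is isomorphic to a matroid in the list `E` of excluded minors of `L`. -/
def InExcludedList {α : Type*} (M : Matroid α) : Prop :=
  (∃ n, 3 ≤ n ∧ IsAMat M n) ∨
  (∃ n k, 2 ≤ k ∧ k ≤ n ∧ (IsBMat M n k ∨ IsCMat M n k)) ∨
  (∃ n, 4 ≤ n ∧ (IsDMat M n ∨ IsEMat M n)) ∨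
  IsWheel3 M ∨ IsWhirl3 M ∨ IsR3Mat M ∨ IsR4Mat M

/-- `M` is an excluded minor of the class `L` of lattice path matroids. -/
def IsExcludedMinorOfLPM {α : Type*} (M : Matroid α) : Prop :=
  M.Finite ∧ ¬ IsLPM M ∧ ∀ N : Matroid α, N.IsMinorOf M → N ≠ M → IsLPM N

section AuxProof

variable {α : Type*} {M : Matroid α} {n r : ℕ}

lemma IntervalPres.J_subset_ground' (P : IntervalPres M n r) (i : Fin r) : P.J i ⊆ M.E :=
  P.pres.1 i

lemma IntervalPres.indep_iff' (P : IntervalPres M n r) {X : Set α} (hX : X ⊆ M.E) :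
    M.Indep X ↔ IsPartialTransversal P.J X := P.pres.2 X hX

lemma IntervalPres.mem_J_iff' (P : IntervalPres M n r) {i : Fin r} {m : Fin n} :
    P.e m ∈ P.J i ↔ P.a i ≤ m ∧ m ≤ P.b i := by
  constructor
  · rintro ⟨m', hm', he⟩
    rw [P.inj he] at hm'
    exact Set.mem_Icc.mp hm'
  · intro h
    exact ⟨m, Set.mem_Icc.mpr h, rfl⟩

lemma IntervalPres.ground_finite' (P : IntervalPres M n r) : M.E.Finite :=
  P.ground ▸ Set.finite_range P.e

lemma IntervalPres.ncard_ground' (P : IntervalPres M n r) : M.E.ncard = n := by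
  rw [← P.ground, ← Set.image_univ, Set.ncard_image_of_injective _ P.inj, Set.ncard_univ]
  simp

lemma IntervalPres.indep_card' (P : IntervalPres M n r) {I : Set α} (hI : M.Indep I) :
    I.Finite ∧ I.ncard ≤ r := by
  obtain ⟨f, hinj, -⟩ := (P.indep_iff' hI.subset_ground).mp hI
  have hfin : I.Finite := Set.Finite.of_finite_image (Set.toFinite _) hinj
  refine ⟨hfin, ?_⟩
  calc I.ncard = (f '' I).ncard := (Set.ncard_image_of_injOn hinj).symm
    _ ≤ (Set.univ : Set (Fin r)).ncard := Set.ncard_le_ncard (Set.subset_univ _) (Set.toFinite _)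
    _ = r := by rw [Set.ncard_univ]; simp

lemma Matroid.IsCircuit'.ssubset_indep' {K D : Set α} (hK : M.IsCircuit' K) (hD : D ⊂ K) :
    M.Indep D := by
  by_contra h
  exact hD.ne (hK.2 D ⟨h, hD.subset.trans hK.1.2⟩ hD.subset)

lemma singleton_indep_of_connected' (hM : M.IsConnected) (h2 : 2 ≤ M.E.ncard)
    (hfin : M.E.Finite) {y : α} (hy : y ∈ M.E) : M.Indep {y} := by
  by_contra hni
  obtain ⟨u, v, hu, hv, huv⟩ := (Set.one_lt_ncard_iff hfin).mp h2
  have hxE : ∃ z ∈ M.E, z ≠ y := by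
    rcases eq_or_ne u y with rfl | h
    · exact ⟨v, hv, fun hvy => huv hvy.symm⟩
    · exact ⟨u, hu, h⟩
  obtain ⟨z, hz, hzy⟩ := hxE
  rcases hM.2 hz hy with ⟨rfl, -⟩ | ⟨K, hK, hzK, hyK⟩
  · exact hzy rfl
  · have hdep : M.Dep {y} := ⟨hni, Set.singleton_subset_iff.mpr hy⟩
    have hKy := hK.2 {y} hdep (Set.singleton_subset_iff.mpr hyK)
    rw [← hKy] at hzK
    exact hzy hzK

lemma IntervalPres.covered' (P : IntervalPres M n r) (hM : M.IsConnected)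
    (h2 : 2 ≤ M.E.ncard) (k : Fin n) : ∃ i : Fin r, P.a i ≤ k ∧ k ≤ P.b i := by
  have hy : P.e k ∈ M.E := P.ground ▸ Set.mem_range_self k
  have hind := singleton_indep_of_connected' hM h2 P.ground_finite' hy
  obtain ⟨f, -, hmem⟩ := (P.indep_iff' (Set.singleton_subset_iff.mpr hy)).mp hind
  exact ⟨f (P.e k), P.mem_J_iff'.mp (hmem _ rfl)⟩

lemma IntervalPres.overlap' (P : IntervalPres M n r) (hM : M.IsConnected)
    {i j : Fin r} (hij : i.1 + 1 = j.1) : P.a j ≤ P.b i := by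
  classical
  by_contra hlt
  push_neg at hlt
  have hne : P.b i ≠ P.a j := ne_of_lt hlt
  have hxy : P.e (P.b i) ≠ P.e (P.a j) := fun h => hne (P.inj h)
  have hxE : P.e (P.b i) ∈ M.E := P.ground ▸ Set.mem_range_self _
  have hyE : P.e (P.a j) ∈ M.E := P.ground ▸ Set.mem_range_self _
  rcases hM.2 hxE hyE with ⟨h, -⟩ | ⟨K, hK, hxK, hyK⟩
  · exact hxy h
  have hKE : K ⊆ M.E := hK.1.2
  set L : Set α := P.e '' Set.Iic (P.b i) with hL
  have hxL : P.e (P.b i) ∈ L := ⟨_, Set.mem_Iic.mpr le_rfl, rfl⟩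
  have hyL : P.e (P.a j) ∉ L := by
    rintro ⟨m, hm, he⟩
    rw [P.inj he] at hm
    exact absurd (Set.mem_Iic.mp hm) (not_le.mpr hlt)
  have hKL : M.Indep (K ∩ L) :=
    hK.ssubset_indep' ⟨Set.inter_subset_left, fun h => hyL (h hyK).2⟩
  have hKU : M.Indep (K \ L) :=
    hK.ssubset_indep' ⟨Set.diff_subset, fun h => (h hxK).2 hxL⟩
  obtain ⟨fL, hLinj, hLmem⟩ := (P.indep_iff' (Set.inter_subset_left.trans hKE)).mp hKL
  obtain ⟨fU, hUinj, hUmem⟩ := (P.indep_iff' (Set.diff_subset.trans hKE)).mp hKU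
  have hLle : ∀ z ∈ K ∩ L, (fL z).1 ≤ i.1 := by
    intro z hz
    obtain ⟨m, hm, rfl⟩ := hz.2
    have hmm := P.mem_J_iff'.mp (hLmem _ hz)
    by_contra hgt
    push_neg at hgt
    have h1 : P.a j ≤ P.a (fL (P.e m)) := P.ha.monotone (Fin.le_def.mpr (by omega))
    have h2 : P.a j ≤ m := le_trans h1 hmm.1
    exact absurd (le_trans h2 (Set.mem_Iic.mp hm)) (not_le.mpr hlt)
  have hUgt : ∀ z ∈ K \ L, i.1 < (fU z).1 := by
    intro z hz
    have hzr : z ∈ Set.range P.e := by rw [P.ground]; exact hKE hz.1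
    obtain ⟨m, rfl⟩ := hzr
    have hmL : ¬ (m ≤ P.b i) := fun h => hz.2 ⟨m, Set.mem_Iic.mpr h, rfl⟩
    have hmm := P.mem_J_iff'.mp (hUmem _ hz)
    by_contra hle
    push_neg at hle
    have h1 : P.b (fU (P.e m)) ≤ P.b i := P.hb.monotone (Fin.le_def.mpr hle)
    exact hmL (le_trans hmm.2 h1)
  set f : α → Fin r := fun z => if z ∈ L then fL z else fU z with hf
  have hmemf : ∀ z ∈ K, z ∈ P.J (f z) := by
    intro z hz
    by_cases hzL : z ∈ L
    · simp only [hf, if_pos hzL]; exact hLmem _ ⟨hz, hzL⟩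
    · simp only [hf, if_neg hzL]; exact hUmem _ ⟨hz, hzL⟩
  have hinjf : Set.InjOn f K := by
    intro z hz w hw hzw
    by_cases hzL : z ∈ L <;> by_cases hwL : w ∈ L
    · exact hLinj ⟨hz, hzL⟩ ⟨hw, hwL⟩ (by simpa only [hf, if_pos hzL, if_pos hwL] using hzw)
    · exfalso
      have h1 := hLle z ⟨hz, hzL⟩
      have h2 := hUgt w ⟨hw, hwL⟩
      simp only [hf, if_pos hzL, if_neg hwL] at hzw
      have := congrArg Fin.val hzw
      omega
    · exfalso
      have h1 := hUgt z ⟨hz, hzL⟩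
      have h2 := hLle w ⟨hw, hwL⟩
      simp only [hf, if_neg hzL, if_pos hwL] at hzw
      have := congrArg Fin.val hzw
      omega
    · exact hUinj ⟨hz, hzL⟩ ⟨hw, hwL⟩ (by simpa only [hf, if_neg hzL, if_neg hwL] using hzw)
  exact hK.1.1 ((P.indep_iff' hKE).mpr ⟨f, hinjf, hmemf⟩)

lemma IntervalPres.a_zero_lt_b' (P : IntervalPres M n r) (hM : M.IsConnected)
    (h2 : 2 ≤ M.E.ncard) (hr : 0 < r) (j : Fin r) : P.a ⟨0, hr⟩ < P.b j := by
  have hb0 : P.b ⟨0, hr⟩ ≤ P.b j := P.hb.monotone (Fin.le_def.mpr (Nat.zero_le _))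
  rcases lt_or_ge 1 r with hr2 | hr1
  · have h1 : P.a ⟨1, hr2⟩ ≤ P.b ⟨0, hr⟩ := P.overlap' hM rfl
    exact lt_of_lt_of_le (lt_of_lt_of_le (P.ha (Fin.lt_def.mpr Nat.zero_lt_one)) h1) hb0
  · by_contra hle
    push_neg at hle
    have hn : 2 ≤ n := by rw [← P.ncard_ground']; exact h2
    have hall : ∀ k : Fin n, k = P.a ⟨0, hr⟩ := by
      intro k
      obtain ⟨i, hik1, hik2⟩ := P.covered' hM h2 k
      have hi0 : i.1 = 0 := by have := i.2; omega
      have hi : i = ⟨0, hr⟩ := Fin.ext hi0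
      have hj0 : j.1 = 0 := by have := j.2; omega
      have hj : j = ⟨0, hr⟩ := Fin.ext hj0
      rw [hi] at hik1 hik2
      rw [hj] at hle
      exact le_antisymm (le_trans hik2 hle) hik1
    have h01 : (⟨0, by omega⟩ : Fin n) = (⟨1, by omega⟩ : Fin n) :=
      (hall _).trans (hall _).symm
    have := congrArg Fin.val h01
    simp at this

private def chainIdx {r : ℕ} (hr : 0 < r) (k i : Fin (r + 1)) : Fin r :=
  if h : i.1 < k.1 then ⟨i.1, by have := k.2; omega⟩ else ⟨i.1 - 1, by have := i.2; omega⟩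

private lemma chainIdx_val {r : ℕ} (hr : 0 < r) (k i : Fin (r + 1)) :
    (chainIdx hr k i).1 = if i.1 < k.1 then i.1 else i.1 - 1 := by
  unfold chainIdx
  split <;> rfl

lemma IntervalPres.chain_spanning_circuit' (P : IntervalPres M n r) (hr : 0 < r)
    (c : Fin (r + 1) → α) (hcinj : Function.Injective c)
    (hc : ∀ j : Fin r, c j.castSucc ∈ P.J j)
    (hc' : ∀ j : Fin r, c j.succ ∈ P.J j) :
    M.IsSpanningCircuit (Set.range c) := by
  classical
  have hsub : Set.range c ⊆ M.E := by
    rintro z ⟨i, rfl⟩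
    rcases lt_or_ge i.1 r with h | h
    · have hi : i = (⟨i.1, h⟩ : Fin r).castSucc := Fin.ext rfl
      rw [hi]
      exact P.J_subset_ground' _ (hc _)
    · have hi : i = (⟨r - 1, by omega⟩ : Fin r).succ := Fin.ext (by have := i.2; simp; omega)
      rw [hi]
      exact P.J_subset_ground' _ (hc' _)
  have hdel : ∀ k : Fin (r + 1), M.Indep (Set.range c \ {c k}) := by
    intro k
    set f : α → Fin r := Function.extend c (chainIdx hr k) (fun _ => ⟨0, hr⟩) with hf
    have hfc : ∀ i, f (c i) = chainIdx hr k i := fun i => hcinj.extend_apply _ _ i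
    have hmem : ∀ z ∈ Set.range c \ {c k}, z ∈ P.J (f z) := by
      rintro z ⟨⟨i, rfl⟩, hzk⟩
      have hik : i.1 ≠ k.1 := fun h => hzk (by rw [show i = k from Fin.ext h]; rfl)
      rw [hfc]
      by_cases h : i.1 < k.1
      · have hv : (chainIdx hr k i).1 = i.1 := by rw [chainIdx_val]; simp [h]
        have hcs : (chainIdx hr k i).castSucc = i := Fin.ext (by rw [Fin.coe_castSucc, hv])
        have hmm := hc (chainIdx hr k i)
        rwa [hcs] at hmm
      · have hlt : k.1 < i.1 := by omega
        have hv : (chainIdx hr k i).1 = i.1 - 1 := by rw [chainIdx_val]; simp [h]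
        have hcs : (chainIdx hr k i).succ = i := Fin.ext (by rw [Fin.val_succ, hv]; omega)
        have hmm := hc' (chainIdx hr k i)
        rwa [hcs] at hmm
    have hinjOn : Set.InjOn f (Set.range c \ {c k}) := by
      rintro z ⟨⟨i, rfl⟩, hzk⟩ w ⟨⟨i', rfl⟩, hwk⟩ hzw
      have hik : i.1 ≠ k.1 := fun h => hzk (by rw [show i = k from Fin.ext h]; rfl)
      have hi'k : i'.1 ≠ k.1 := fun h => hwk (by rw [show i' = k from Fin.ext h]; rfl)
      rw [hfc, hfc] at hzw
      have h1 := congrArg Fin.val hzw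
      rw [chainIdx_val, chainIdx_val] at h1
      have : i = i' := Fin.ext (by split_ifs at h1 <;> omega)
      exact congrArg c this
    exact (P.indep_iff' (Set.diff_subset.trans hsub)).mpr ⟨f, hinjOn, hmem⟩
  have hfin : (Set.range c).Finite := Set.finite_range c
  have hcard : (Set.range c).ncard = r + 1 := by
    rw [← Set.image_univ, Set.ncard_image_of_injective _ hcinj, Set.ncard_univ]
    simp
  have hdep : M.Dep (Set.range c) := by
    refine ⟨fun hind => ?_, hsub⟩
    have hle := (P.indep_card' hind).2
    omega
  have hcirc : M.IsCircuit' (Set.range c) := by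
    refine ⟨hdep, fun D hD hDsub => ?_⟩
    by_contra hne
    obtain ⟨z, hzr, hzD⟩ := Set.exists_of_ssubset (hDsub.ssubset_of_ne hne)
    obtain ⟨k, rfl⟩ := hzr
    have hsubD : D ⊆ Set.range c \ {c k} := fun w hw =>
      ⟨hDsub hw, fun h => hzD (by rw [← Set.mem_singleton_iff.mp h]; exact hw)⟩
    exact hD.1 ((hdel k).subset hsubD)
  set k0 : Fin (r + 1) := ⟨0, Nat.succ_pos r⟩ with hk0
  have hB : M.Indep (Set.range c \ {c k0}) := hdel k0
  obtain ⟨B', hB', hsubB⟩ := hB.exists_isBase_superset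
  have hBcard : (Set.range c \ {c k0}).ncard = r := by
    rw [Set.ncard_diff_singleton_of_mem (Set.mem_range_self _), hcard]
    omega
  have hB'card := P.indep_card' hB'.indep
  have hBB' : Set.range c \ {c k0} = B' :=
    Set.eq_of_subset_of_ncard_le hsubB (by omega) hB'card.1
  rw [← hBB'] at hB'
  exact ⟨hcirc, hB'.spanning.superset Set.diff_subset hsub⟩

private noncomputable def defaultChain {α : Type*} {M : Matroid α} {n r : ℕ}
    (P : IntervalPres M n r) (hr : 0 < r) (i : Fin (r + 1)) : α :=
  if i.1 = 0 then P.e (P.a ⟨0, hr⟩) else P.e (P.b ⟨i.1 - 1, by have := i.2; omega⟩)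

private lemma defaultChain_zero {α : Type*} {M : Matroid α} {n r : ℕ}
    (P : IntervalPres M n r) (hr : 0 < r) {i : Fin (r + 1)} (h : i.1 = 0) :
    defaultChain P hr i = P.e (P.a ⟨0, hr⟩) := by
  unfold defaultChain
  rw [if_pos h]

private lemma defaultChain_pos {α : Type*} {M : Matroid α} {n r : ℕ}
    (P : IntervalPres M n r) (hr : 0 < r) {i : Fin (r + 1)} (h : i.1 ≠ 0) (h' : i.1 - 1 < r) :
    defaultChain P hr i = P.e (P.b ⟨i.1 - 1, h'⟩) := by
  unfold defaultChain
  rw [if_neg h]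

private noncomputable def modChain {α : Type*} {M : Matroid α} {n r : ℕ}
    (P : IntervalPres M n r) (hr : 0 < r) (x : α) (p : ℕ) (i : Fin (r + 1)) : α :=
  if i.1 = p + 1 then x else defaultChain P hr i

private lemma modChain_pos {α : Type*} {M : Matroid α} {n r : ℕ}
    (P : IntervalPres M n r) (hr : 0 < r) (x : α) (p : ℕ) {i : Fin (r + 1)} (h : i.1 = p + 1) :
    modChain P hr x p i = x := by
  unfold modChain; rw [if_pos h]

private lemma modChain_neg {α : Type*} {M : Matroid α} {n r : ℕ}
    (P : IntervalPres M n r) (hr : 0 < r) (x : α) (p : ℕ) {i : Fin (r + 1)} (h : i.1 ≠ p + 1) :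
    modChain P hr x p i = defaultChain P hr i := by
  unfold modChain; rw [if_neg h]

end AuxProof


section Statements

variable {α : Type*}

theorem mem_spanning_circuit
    (M : Matroid α) (hM : M.IsConnected) (h2 : 2 ≤ M.E.ncard)
    (n r : ℕ) (P : IntervalPres M n r) (x : α) (hx : x ∈ M.E)
    (hcond : (∃ i j : Fin r, i ≠ j ∧ x ∈ P.J i ∧ x ∈ P.J j) ∨
      (∃ hr : 0 < r, x = P.e (P.a ⟨0, hr⟩) ∨ x = P.e (P.b ⟨r - 1, by omega⟩))) :
    ∃ C, M.IsSpanningCircuit C ∧ x ∈ C := by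
  classical
  have hr : 0 < r := by
    rcases hcond with ⟨i, -, -, -, -⟩ | ⟨hr, -⟩
    · exact lt_of_le_of_lt (Nat.zero_le i.1) i.2
    · exact hr
  have ha0b : ∀ j : Fin r, P.a ⟨0, hr⟩ < P.b j := P.a_zero_lt_b' hM h2 hr
  have hov : ∀ j : Fin r, ∀ h : j.1 + 1 < r, P.a ⟨j.1 + 1, h⟩ ≤ P.b j :=
    fun j h => P.overlap' hM rfl
  have hdcinj : Function.Injective (defaultChain P hr) := by
    intro i i' h
    rcases Nat.eq_zero_or_pos i.1 with h0 | h0 <;> rcases Nat.eq_zero_or_pos i'.1 with h0' | h0'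
    · exact Fin.ext (h0.trans h0'.symm)
    · rw [defaultChain_zero P hr h0,
        defaultChain_pos P hr (by omega) (by have := i'.2; omega)] at h
      exact absurd (P.inj h) (ne_of_lt (ha0b _))
    · rw [defaultChain_pos P hr (by omega) (by have := i.2; omega),
        defaultChain_zero P hr h0'] at h
      exact absurd (P.inj h).symm (ne_of_lt (ha0b _))
    · rw [defaultChain_pos P hr (by omega) (by have := i.2; omega),
        defaultChain_pos P hr (by omega) (by have := i'.2; omega)] at h
      have hvv : i.1 - 1 = i'.1 - 1 := congrArg Fin.val (P.hb.injective (P.inj h))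
      exact Fin.ext (by omega)
  have hdccast : ∀ j : Fin r, defaultChain P hr j.castSucc ∈ P.J j := by
    intro j
    rcases Nat.eq_zero_or_pos j.1 with h0 | h0
    · rw [defaultChain_zero P hr (by rw [Fin.coe_castSucc]; exact h0)]
      rw [P.mem_J_iff']
      have hj : j = ⟨0, hr⟩ := Fin.ext h0
      rw [hj]
      exact ⟨le_rfl, P.hab _⟩
    · rw [defaultChain_pos P hr (by rw [Fin.coe_castSucc]; omega)
        (by rw [Fin.coe_castSucc]; have := j.2; omega)]
      rw [P.mem_J_iff']
      constructor
      · have hij : ((⟨j.1 - 1, by have := j.2; omega⟩ : Fin r)).1 + 1 = j.1 :=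
          (by have := j.2; omega : j.1 - 1 + 1 = j.1)
        exact P.overlap' hM hij
      · exact P.hb.monotone (Fin.le_def.mpr (Nat.sub_le _ _))
  have hdcsucc : ∀ j : Fin r, defaultChain P hr j.succ ∈ P.J j := by
    intro j
    rw [defaultChain_pos P hr (by rw [Fin.val_succ]; omega)
      (by rw [Fin.val_succ]; have := j.2; omega)]
    rw [P.mem_J_iff']
    exact ⟨P.hab j, le_rfl⟩
  by_cases hx0 : x = P.e (P.a ⟨0, hr⟩) ∨ ∃ j : Fin r, x = P.e (P.b j)
  · refine ⟨Set.range (defaultChain P hr),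
      P.chain_spanning_circuit' hr _ hdcinj hdccast hdcsucc, ?_⟩
    rcases hx0 with h | ⟨j, h⟩
    · exact ⟨⟨0, Nat.succ_pos r⟩, (defaultChain_zero P hr rfl).trans h.symm⟩
    · refine ⟨j.succ, ?_⟩
      rw [defaultChain_pos P hr (by rw [Fin.val_succ]; omega)
        (by rw [Fin.val_succ]; have := j.2; omega)]
      exact h.symm
  · push_neg at hx0
    obtain ⟨hxa, hxb⟩ := hx0
    rcases hcond with ⟨i0, j0, hij, hxi, hxj⟩ | ⟨hr', h⟩
    swap
    · rcases h with h | h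
      · exact absurd h hxa
      · exact absurd h (hxb _)
    obtain ⟨p, q, hpq, hxp, hxq⟩ : ∃ p q : Fin r, p < q ∧ x ∈ P.J p ∧ x ∈ P.J q := by
      rcases hij.lt_or_gt with h | h
      · exact ⟨i0, j0, h, hxi, hxj⟩
      · exact ⟨j0, i0, h, hxj, hxi⟩
    have hxr : x ∈ Set.range P.e := by rw [P.ground]; exact hx
    obtain ⟨m, rfl⟩ := hxr
    obtain ⟨hap, hbp⟩ := P.mem_J_iff'.mp hxp
    obtain ⟨haq, hbq⟩ := P.mem_J_iff'.mp hxq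
    have hpq' : p.1 < q.1 := hpq
    have hp1r : p.1 + 1 < r := by have := q.2; omega
    set c := modChain P hr (P.e m) p.1 with hc
    have hxm : ∀ i : Fin (r + 1), P.e m ≠ defaultChain P hr i := by
      intro i hcontra
      rcases Nat.eq_zero_or_pos i.1 with h0 | h0
      · rw [defaultChain_zero P hr h0] at hcontra
        exact hxa hcontra
      · rw [defaultChain_pos P hr (by omega) (by have := i.2; omega)] at hcontra
        exact hxb _ hcontra
    have hcinj : Function.Injective c := by
      intro i i' h
      by_cases h1 : i.1 = p.1 + 1 <;> by_cases h2 : i'.1 = p.1 + 1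
      · exact Fin.ext (h1.trans h2.symm)
      · rw [hc, modChain_pos P hr _ _ h1, modChain_neg P hr _ _ h2] at h
        exact absurd h (hxm i')
      · rw [hc, modChain_neg P hr _ _ h1, modChain_pos P hr _ _ h2] at h
        exact absurd h.symm (hxm i)
      · rw [hc, modChain_neg P hr _ _ h1, modChain_neg P hr _ _ h2] at h
        exact hdcinj h
    have hccast : ∀ j : Fin r, c j.castSucc ∈ P.J j := by
      intro j
      by_cases hj : j.1 = p.1 + 1
      · rw [hc, modChain_pos P hr _ _ (by rw [Fin.coe_castSucc]; exact hj)]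
        rw [P.mem_J_iff']
        constructor
        · calc P.a j ≤ P.a q := P.ha.monotone (Fin.le_def.mpr (by omega))
            _ ≤ m := haq
        · calc m ≤ P.b p := hbp
            _ ≤ P.b j := P.hb.monotone (Fin.le_def.mpr (by omega))
      · rw [hc, modChain_neg P hr _ _ (by rw [Fin.coe_castSucc]; exact hj)]
        exact hdccast j
    have hcsucc : ∀ j : Fin r, c j.succ ∈ P.J j := by
      intro j
      by_cases hj : j.1 = p.1
      · have hjp : j = p := Fin.ext hj
        rw [hc, modChain_pos P hr _ _ (by rw [Fin.val_succ]; omega)]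
        rw [hjp]
        exact hxp
      · rw [hc, modChain_neg P hr _ _ (by rw [Fin.val_succ]; omega)]
        exact hdcsucc j
    refine ⟨Set.range c, P.chain_spanning_circuit' hr c hcinj hccast hcsucc, ?_⟩
    exact ⟨⟨p.1 + 1, by have := p.2; omega⟩, by rw [hc, modChain_pos P hr _ _ rfl]⟩

end Statements
end

section
/- Let x be an element of a matroid M that is not a loop. If F is a pnc-flat of the deletion M∖x, then exactly one of F and F ∪ {x} is a pnc-flat of M. Likewise, if F is a pnc-flat of the contraction M/x, then exactly one of F and F ∪ {x} is a pnc-flat of M. -/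
open Matroid Set

namespace MatroidAux

open Matroid Set

variable {α : Type*} {M : Matroid α} {C C₁ C₂ D I X F R B : Set α} {e f g x y : α}

lemma flat_closure (M : Matroid α) (X : Set α) : M.IsFlat (M.closure X) := by
  refine ⟨fun I Y hI hIY => ?_, M.closure_subset_ground X⟩
  have h1 : M.closure I = M.closure (M.closure X) := hI.closure_eq_closure
  rw [Matroid.closure_closure] at h1
  exact hIY.subset_closure.trans h1.subset

lemma flat_of_closure_subset (hX : X ⊆ M.E) (h : M.closure X ⊆ X) : M.IsFlat X := by
  have h' : M.closure X = X := subset_antisymm h (M.subset_closure X hX)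
  rw [← h']; exact flat_closure M X

lemma circuit_nonempty (hC : M.IsCircuit' C) : C.Nonempty := by
  rcases C.eq_empty_or_nonempty with rfl | h
  · exact absurd M.empty_indep hC.1.1
  · exact h

lemma dep_nonempty (hD : M.Dep D) : D.Nonempty := by
  rcases D.eq_empty_or_nonempty with rfl | h
  · exact absurd M.empty_indep hD.1
  · exact h

lemma ssubset_circuit_indep (hC : M.IsCircuit' C) (hD : D ⊂ C) : M.Indep D := by
  by_contra h
  exact hD.ne (hC.2 D ⟨h, hD.subset.trans hC.1.2⟩ hD.subset)

lemma exists_circuit_subset_aux (hfin : M.Finite) :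
    ∀ n, ∀ D, D.ncard ≤ n → M.Dep D → ∃ C, M.IsCircuit' C ∧ C ⊆ D := by
  haveI := hfin
  intro n
  induction n with
  | zero =>
    intro D hcard hD
    have hfinD : D.Finite := M.set_finite D hD.2
    have hDe : D = ∅ := by
      rw [← Set.ncard_eq_zero hfinD]; omega
    exact absurd (hDe ▸ M.empty_indep) hD.1
  | succ n ih =>
    intro D hcard hD
    by_cases h : ∀ D', M.Dep D' → D' ⊆ D → D' = D
    · exact ⟨D, ⟨hD, h⟩, Subset.rfl⟩
    · push_neg at h
      obtain ⟨D', hD', hsub, hne⟩ := h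
      have hss : D' ⊂ D := Set.ssubset_iff_subset_ne.2 ⟨hsub, hne⟩
      have hfinD : D.Finite := M.set_finite D hD.2
      have hlt : D'.ncard < D.ncard := Set.ncard_lt_ncard hss hfinD
      obtain ⟨C, hC, hCsub⟩ := ih D' (by omega) hD'
      exact ⟨C, hC, hCsub.trans hsub⟩

lemma exists_circuit_subset (hfin : M.Finite) (hD : M.Dep D) :
    ∃ C, M.IsCircuit' C ∧ C ⊆ D :=
  exists_circuit_subset_aux hfin D.ncard D le_rfl hD

lemma circuit_mem_closure_diff (hC : M.IsCircuit' C) (he : e ∈ C) :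
    e ∈ M.closure (C \ {e}) := by
  have hI : M.Indep (C \ {e}) :=
    ssubset_circuit_indep hC (Set.sdiff_singleton_ssubset.2 he)
  have hdep : M.Dep (insert e (C \ {e})) := by
    rw [insert_diff_singleton, insert_eq_of_mem he]; exact hC.1
  exact (hI.insert_dep_iff.1 hdep).1

lemma exists_circuit_of_mem_closure (hfin : M.Finite) (hX : X ⊆ M.E)
    (he : e ∈ M.closure X) (heX : e ∉ X) :
    ∃ C, M.IsCircuit' C ∧ e ∈ C ∧ C ⊆ insert e X := by
  obtain ⟨I, hI⟩ := M.exists_isBasis X hX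
  have heI : e ∈ M.closure I := by rwa [hI.closure_eq_closure]
  have heI' : e ∉ I := fun h => heX (hI.subset h)
  have hdep : M.Dep (insert e I) := by
    rw [hI.indep.insert_dep_iff]; exact ⟨heI, heI'⟩
  obtain ⟨C, hC, hCsub⟩ := exists_circuit_subset hfin hdep
  refine ⟨C, hC, ?_, hCsub.trans (insert_subset_insert hI.subset)⟩
  by_contra h
  have hCI : C ⊆ I := fun a ha => ((hCsub ha).resolve_left (fun h' => h (h' ▸ ha)))
  exact hC.1.1 (hI.indep.subset hCI)

lemma restrict_circuit_iff (hR : R ⊆ M.E) (hCR : C ⊆ R) :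
    (M ↾ R).IsCircuit' C ↔ M.IsCircuit' C := by
  constructor
  · rintro ⟨hdep, hmin⟩
    rw [restrict_dep_iff] at hdep
    refine ⟨⟨hdep.1, hCR.trans hR⟩, fun D hD hsub => ?_⟩
    exact hmin D (restrict_dep_iff.2 ⟨hD.1, hsub.trans hCR⟩) hsub
  · rintro ⟨hdep, hmin⟩
    refine ⟨restrict_dep_iff.2 ⟨hdep.1, hCR⟩, fun D hD hsub => ?_⟩
    rw [restrict_dep_iff] at hD
    exact hmin D ⟨hD.1, hD.2.trans hR⟩ hsub

lemma strong_elimination (hfin : M.Finite) (h1 : M.IsCircuit' C₁) (h2 : M.IsCircuit' C₂)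
    (he1 : e ∈ C₁) (he2 : e ∈ C₂) (hf1 : f ∈ C₁) (hf2 : f ∉ C₂) :
    ∃ C, M.IsCircuit' C ∧ f ∈ C ∧ C ⊆ (C₁ ∪ C₂) \ {e} := by
  have hef : e ≠ f := fun h => hf2 (h ▸ he2)
  set B : Set α := (C₁ ∪ C₂) \ {e, f} with hB
  have hBE : B ⊆ M.E := diff_subset.trans (union_subset h1.1.2 h2.1.2)
  have hC2B : C₂ \ {e} ⊆ B := by
    rintro a ⟨ha, hae⟩
    refine ⟨Or.inr ha, ?_⟩
    rintro (rfl | rfl)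
    · exact hae rfl
    · exact hf2 ha
  have heB : e ∈ M.closure B :=
    M.closure_subset_closure hC2B (circuit_mem_closure_diff h2 he2)
  have hclB : M.closure (insert e B) = M.closure B :=
    closure_insert_eq_of_mem_closure heB
  have hC1B : C₁ \ {f} ⊆ insert e B := by
    rintro a ⟨ha, haf⟩
    rcases eq_or_ne a e with rfl | hae
    · exact mem_insert _ _
    · refine mem_insert_of_mem _ ⟨Or.inl ha, ?_⟩
      rintro (rfl | rfl)
      · exact hae rfl
      · exact haf rfl
  have hfB : f ∈ M.closure B := by
    rw [← hclB]
    exact M.closure_subset_closure hC1B (circuit_mem_closure_diff h1 hf1)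
  have hfB' : f ∉ B := fun h => h.2 (Or.inr rfl)
  obtain ⟨C, hC, hfC, hCsub⟩ := exists_circuit_of_mem_closure hfin hBE hfB hfB'
  refine ⟨C, hC, hfC, hCsub.trans ?_⟩
  rintro a (rfl | haB)
  · exact ⟨Or.inl hf1, fun h => hef (mem_singleton_iff.1 h).symm⟩
  · refine ⟨haB.1, fun h => haB.2 (Or.inl (mem_singleton_iff.1 h))⟩

lemma circuit_connects (hfin : M.Finite) (h1 : M.IsCircuit' C₁) (h2 : M.IsCircuit' C₂)
    (he : e ∈ C₁) (hg : g ∈ C₂) (hi : (C₁ ∩ C₂).Nonempty) :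
    ∃ C, M.IsCircuit' C ∧ e ∈ C ∧ g ∈ C ∧ C ⊆ C₁ ∪ C₂ := by
  haveI := hfin
  have hfinU : (C₁ ∪ C₂).Finite := M.set_finite _ (union_subset h1.1.2 h2.1.2)
  set S : Set ℕ := {n | ∃ D₁ D₂, M.IsCircuit' D₁ ∧ M.IsCircuit' D₂ ∧ e ∈ D₁ ∧ g ∈ D₂ ∧
      (D₁ ∩ D₂).Nonempty ∧ D₁ ∪ D₂ ⊆ C₁ ∪ C₂ ∧ n = (D₁ ∪ D₂).ncard} with hS
  have hSne : (C₁ ∪ C₂).ncard ∈ S := ⟨C₁, C₂, h1, h2, he, hg, hi, Subset.rfl, rfl⟩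
  obtain ⟨D₁, D₂, hD1, hD2, heD1, hgD2, hiD, hsubD, hcardD⟩ := Nat.sInf_mem ⟨_, hSne⟩
  have hmin : ∀ n ∈ S, sInf S ≤ n := fun n hn => Nat.sInf_le hn
  by_cases heD2 : e ∈ D₂
  · exact ⟨D₂, hD2, heD2, hgD2, (subset_union_right).trans hsubD⟩
  by_cases hgD1 : g ∈ D₁
  · exact ⟨D₁, hD1, heD1, hgD1, (subset_union_left).trans hsubD⟩
  obtain ⟨h, hh1, hh2⟩ := hiD
  have hfinD : (D₁ ∪ D₂).Finite := hfinU.subset hsubD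
  obtain ⟨C₃, hC3, heC3, hC3sub⟩ :=
    strong_elimination hfin hD1 hD2 hh1 hh2 heD1 heD2
  by_cases hgC3 : g ∈ C₃
  · exact ⟨C₃, hC3, heC3, hgC3, (hC3sub.trans diff_subset).trans hsubD⟩
  obtain ⟨C₄, hC4, hgC4, hC4sub⟩ :=
    strong_elimination hfin hD2 hD1 hh2 hh1 hgD2 hgD1
  by_cases heC4 : e ∈ C₄
  · refine ⟨C₄, hC4, heC4, hgC4, ?_⟩
    refine (hC4sub.trans diff_subset).trans ?_
    rw [union_comm]; exact hsubD
  have hC3meet : ∃ t, t ∈ C₃ ∧ t ∈ D₂ ∧ t ∉ D₁ := by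
    by_contra hcon
    push_neg at hcon
    have hsub3 : C₃ ⊆ D₁ := by
      intro a ha
      rcases (hC3sub ha).1 with h' | h'
      · exact h'
      · exact hcon a ha h'
    have hss : C₃ ⊂ D₁ := by
      refine Set.ssubset_iff_subset_ne.2 ⟨hsub3, ?_⟩
      intro heq
      exact (hC3sub (heq ▸ hh1)).2 rfl
    exact hC3.1.1 (ssubset_circuit_indep hD1 hss)
  have hC4meet : (D₁ ∩ C₄).Nonempty := by
    by_contra hcon
    rw [not_nonempty_iff_eq_empty] at hcon
    have hsub4 : C₄ ⊆ D₂ := by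
      intro a ha
      rcases (hC4sub ha).1 with h' | h'
      · exact h'
      · exact absurd (Set.eq_empty_iff_forall_notMem.1 hcon a) (fun hh => hh ⟨h', ha⟩)
    have hss : C₄ ⊂ D₂ := by
      refine Set.ssubset_iff_subset_ne.2 ⟨hsub4, ?_⟩
      intro heq
      exact (hC4sub (heq ▸ hh2)).2 rfl
    exact hC4.1.1 (ssubset_circuit_indep hD2 hss)
  by_cases hint : (C₃ ∩ C₄).Nonempty
  · exfalso
    have hsub34 : C₃ ∪ C₄ ⊆ (D₁ ∪ D₂) \ {h} := by
      refine union_subset hC3sub ?_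
      intro a ha
      exact ⟨(hC4sub ha).1.elim Or.inr Or.inl, (hC4sub ha).2⟩
    have hss : C₃ ∪ C₄ ⊂ D₁ ∪ D₂ := by
      refine Set.ssubset_iff_subset_ne.2 ⟨hsub34.trans diff_subset, ?_⟩
      intro heq
      exact (hsub34 (heq ▸ (Or.inl hh1 : h ∈ D₁ ∪ D₂))).2 rfl
    have hlt : (C₃ ∪ C₄).ncard < (D₁ ∪ D₂).ncard := Set.ncard_lt_ncard hss hfinD
    have hmem : (C₃ ∪ C₄).ncard ∈ S :=
      ⟨C₃, C₄, hC3, hC4, heC3, hgC4, hint,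
        (hsub34.trans diff_subset).trans hsubD, rfl⟩
    have hle := hmin _ hmem
    omega
  · exfalso
    have hsub14 : D₁ ∪ C₄ ⊆ D₁ ∪ D₂ :=
      union_subset subset_union_left
        (fun a ha => (hC4sub ha).1.elim Or.inr Or.inl)
    have hmem : (D₁ ∪ C₄).ncard ∈ S :=
      ⟨D₁, C₄, hD1, hC4, heD1, hgC4, hC4meet, hsub14.trans hsubD, rfl⟩
    have hge : (D₁ ∪ D₂).ncard ≤ (D₁ ∪ C₄).ncard := hcardD ▸ hmin _ hmem
    have heq : D₁ ∪ C₄ = D₁ ∪ D₂ := Set.eq_of_subset_of_ncard_le hsub14 hge hfinD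
    obtain ⟨t, htC3, htD2, htD1⟩ := hC3meet
    have ht : t ∈ D₁ ∪ C₄ := heq ▸ (Or.inr htD2 : t ∈ D₁ ∪ D₂)
    rcases ht with h' | h'
    · exact htD1 h'
    · exact hint ⟨t, htC3, h'⟩

end MatroidAux


namespace MatroidAux

open Matroid Set

variable {α : Type*} {M : Matroid α} {C C₁ C₂ D I X F R B : Set α} {e f g x y : α}

lemma con_ground (M : Matroid α) (x : α) : (M.con {x}).E = M.E \ {x} := rfl

lemma con_base_iff (hx : x ∈ M.E) (hxi : M.Indep {x}) :
    (M.con {x}).IsBase B ↔ M.IsBase (insert x B) ∧ B ⊆ M.E \ {x} := by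
  have hR : M.E \ {x} ⊆ M✶.E := by rw [dual_ground]; exact diff_subset
  obtain ⟨B₀, hB₀, hxB₀⟩ : ∃ B₀, M.IsBase B₀ ∧ x ∈ B₀ := by
    obtain ⟨B₀, hB₀, hsub⟩ := hxi.exists_isBase_superset
    exact ⟨B₀, hB₀, hsub rfl⟩
  have hspan : M✶.closure (M.E \ {x}) = M✶.E := by
    have hdb : M✶.IsBase (M.E \ B₀) := hB₀.compl_isBase_dual
    exact hdb.closure_of_superset (diff_subset_diff_right (singleton_subset_iff.2 hxB₀))
  have hgr : (M✶ ↾ (M.E \ {x})).E = M.E \ {x} := rfl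
  constructor
  · intro hN
    have hN' : (M✶ ↾ (M.E \ {x}))✶.IsBase B := hN
    rw [dual_isBase_iff'] at hN'
    obtain ⟨hbase, hBsub⟩ := hN'
    rw [hgr] at hbase hBsub
    have hbas : M✶.IsBasis ((M.E \ {x}) \ B) (M.E \ {x}) := (isBase_restrict_iff hR).1 hbase
    have hb2 : M✶.IsBase ((M.E \ {x}) \ B) := by
      refine hbas.indep.isBase_of_ground_subset_closure ?_
      rw [← hspan]
      exact closure_subset_closure_of_subset_closure hbas.subset_closure
    have hb3 : M.IsBase (M.E \ ((M.E \ {x}) \ B)) := by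
      exact (dual_isBase_iff (M := M) (show (M.E \ {x}) \ B ⊆ M.E from diff_subset.trans diff_subset)).1 hb2
    have hset : M.E \ ((M.E \ {x}) \ B) = insert x B := by
      ext a
      simp only [mem_diff, mem_insert_iff, mem_singleton_iff, not_and, not_not]
      constructor
      · rintro ⟨haE, h2⟩
        by_cases hax : a = x
        · exact Or.inl hax
        · exact Or.inr (h2 ⟨haE, hax⟩)
      · rintro (rfl | haB)
        · exact ⟨hx, fun h => absurd rfl h.2⟩
        · exact ⟨(hBsub haB).1, fun _ => haB⟩
    rw [hset] at hb3
    exact ⟨hb3, hBsub⟩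
  · rintro ⟨hbase, hBsub⟩
    show (M✶ ↾ (M.E \ {x}))✶.IsBase B
    rw [dual_isBase_iff', hgr]
    refine ⟨?_, hBsub⟩
    have hset : M.E \ ((M.E \ {x}) \ B) = insert x B := by
      ext a
      simp only [mem_diff, mem_insert_iff, mem_singleton_iff, not_and, not_not]
      constructor
      · rintro ⟨haE, h2⟩
        by_cases hax : a = x
        · exact Or.inl hax
        · exact Or.inr (h2 ⟨haE, hax⟩)
      · rintro (rfl | haB)
        · exact ⟨hx, fun h => absurd rfl h.2⟩
        · exact ⟨(hBsub haB).1, fun _ => haB⟩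
    have hb2 : M✶.IsBase ((M.E \ {x}) \ B) := by
      rw [dual_isBase_iff (M := M) (show (M.E \ {x}) \ B ⊆ M.E from diff_subset.trans diff_subset), hset]
      exact hbase
    rw [isBase_restrict_iff hR]
    refine hb2.indep.isBasis_of_subset_of_subset_closure diff_subset ?_
    rw [hb2.closure_eq]
    exact hR
  
lemma con_indep_iff (hx : x ∈ M.E) (hxi : M.Indep {x}) :
    (M.con {x}).Indep I ↔ M.Indep (insert x I) ∧ I ⊆ M.E \ {x} := by
  constructor
  · intro h
    obtain ⟨B, hB, hIB⟩ := h.exists_isBase_superset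
    rw [con_base_iff hx hxi] at hB
    exact ⟨hB.1.indep.subset (insert_subset_insert hIB), hIB.trans hB.2⟩
  · rintro ⟨h, hIR⟩
    obtain ⟨B, hB, hsub⟩ := h.exists_isBase_superset
    have hxB : x ∈ B := hsub (mem_insert _ _)
    refine Matroid.indep_iff.2 ⟨B \ {x}, ?_, ?_⟩
    · rw [con_base_iff hx hxi]
      constructor
      · rwa [insert_diff_singleton, insert_eq_of_mem hxB]
      · exact diff_subset_diff_left hB.subset_ground
    · intro a ha
      exact ⟨hsub (mem_insert_of_mem _ ha), (hIR ha).2⟩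

lemma con_dep_iff (hx : x ∈ M.E) (hxi : M.Indep {x}) :
    (M.con {x}).Dep X ↔ ¬ M.Indep (insert x X) ∧ X ⊆ M.E \ {x} := by
  rw [dep_iff, con_indep_iff hx hxi, con_ground]
  tauto

lemma con_circuit (hfin : M.Finite) (hx : x ∈ M.E) (hxi : M.Indep {x})
    (hC : (M.con {x}).IsCircuit' C) : M.IsCircuit' C ∨ M.IsCircuit' (insert x C) := by
  have hCdep := hC.1
  rw [con_dep_iff hx hxi] at hCdep
  obtain ⟨hni, hCR⟩ := hCdep
  have hCE : C ⊆ M.E := hCR.trans diff_subset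
  have hdep : M.Dep (insert x C) := ⟨hni, insert_subset hx hCE⟩
  obtain ⟨D, hD, hsub⟩ := exists_circuit_subset hfin hdep
  by_cases hxD : x ∈ D
  · right
    have hDx : D \ {x} ⊆ C := by
      rintro a ⟨haD, hax⟩
      exact (hsub haD).resolve_left hax
    have hDdep : (M.con {x}).Dep (D \ {x}) := by
      rw [con_dep_iff hx hxi]
      constructor
      · rw [insert_diff_singleton, insert_eq_of_mem hxD]
        exact hD.1.1
      · exact hDx.trans hCR
    have heq : D \ {x} = C := hC.2 _ hDdep hDx
    have : insert x C = D := by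
      rw [← heq, insert_diff_singleton, insert_eq_of_mem hxD]
    rwa [this]
  · left
    have hDC : D ⊆ C := fun a ha => (hsub ha).resolve_left (fun h => hxD (h ▸ ha))
    have hDdep : (M.con {x}).Dep D := by
      rw [con_dep_iff hx hxi]
      refine ⟨fun h => hD.1.1 (h.subset (subset_insert _ _)), hDC.trans hCR⟩
    have heq : D = C := hC.2 _ hDdep hDC
    rwa [← heq]

lemma con_flat_insert (hx : x ∈ M.E) (hxi : M.Indep {x})
    (hF : (M.con {x}).IsFlat F) : M.IsFlat (insert x F) := by
  set N := M.con {x} with hN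
  have hFR : F ⊆ M.E \ {x} := hF.subset_ground
  have hFE : F ⊆ M.E := hFR.trans diff_subset
  have hxF : x ∉ F := fun h => (hFR h).2 rfl
  obtain ⟨I, hI⟩ := N.exists_isBasis F hF.subset_ground
  have hIi : M.Indep (insert x I) := ((con_indep_iff hx hxi).1 hI.indep).1
  have hbas : M.IsBasis (insert x I) (insert x F) := by
    refine hIi.isBasis_of_subset_of_subset_closure (insert_subset_insert hI.subset) ?_
    rintro a (rfl | haF)
    · exact M.mem_closure_of_mem (mem_insert _ _) (insert_subset hx (hI.subset.trans hFE))
    · by_cases haI : a ∈ I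
      · exact M.mem_closure_of_mem (mem_insert_of_mem _ haI)
          (insert_subset hx (hI.subset.trans hFE))
      · have hd : N.Dep (insert a I) := hI.insert_dep ⟨haF, haI⟩
        rw [con_dep_iff hx hxi] at hd
        have hd2 : M.Dep (insert a (insert x I)) := by
          rw [Set.insert_comm]
          exact ⟨hd.1, insert_subset hx (insert_subset (hFE haF) (hI.subset.trans hFE))⟩
        exact (hIi.insert_dep_iff.1 hd2).1
  refine flat_of_closure_subset (insert_subset hx hFE) ?_
  intro a ha
  rw [← hbas.closure_eq_closure] at ha
  rcases eq_or_ne a x with rfl | hax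
  · exact mem_insert _ _
  rcases (hIi.mem_closure_iff).1 ha with hd | hmem
  · have haE : a ∈ M.E := hd.2 (mem_insert _ _)
    have hNd : N.Dep (insert a I) := by
      rw [con_dep_iff hx hxi]
      constructor
      · rw [Set.insert_comm]; exact hd.1
      · exact insert_subset ⟨haE, hax⟩ (hI.subset.trans hFR)
    have haI : a ∉ I := fun h => absurd (insert_eq_of_mem h ▸ hNd)
      (hI.indep.not_dep)
    have : a ∈ N.closure I := (hI.indep.insert_dep_iff.1 hNd).1
    rw [hI.closure_eq_closure, hF.closure] at this
    exact mem_insert_of_mem _ this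
  · rcases hmem with rfl | haI
    · exact mem_insert _ _
    · exact mem_insert_of_mem _ (hI.subset haI)

end MatroidAux


namespace MatroidAux

open Matroid Set

variable {α : Type*} {M : Matroid α} {C C₁ C₂ D I X F R B : Set α} {e f g x y : α}

lemma connected_insert (hfin : M.Finite) (hFE : F ⊆ M.E) (hx : x ∈ M.E) (hxF : x ∉ F)
    (hcirc : ∀ y z, y ∈ F → z ∈ F → y ≠ z → ∃ C, M.IsCircuit' C ∧ y ∈ C ∧ z ∈ C ∧ C ⊆ insert x F)
    (hx0 : ∃ C₀, M.IsCircuit' C₀ ∧ x ∈ C₀ ∧ C₀ ⊆ insert x F ∧ (C₀ \ {x}).Nonempty) :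
    (M ↾ (insert x F)).IsConnected := by
  have hFE' : insert x F ⊆ M.E := insert_subset hx hFE
  have hkey : ∀ y ∈ F, ∃ C, M.IsCircuit' C ∧ x ∈ C ∧ y ∈ C ∧ C ⊆ insert x F := by
    intro y hy
    obtain ⟨C₀, hC0, hxC0, hC0sub, c, hc⟩ := hx0
    have hcF : c ∈ F := by
      rcases mem_insert_iff.1 (hC0sub hc.1) with h | h
      · exact absurd h hc.2
      · exact h
    rcases eq_or_ne c y with rfl | hcy
    · exact ⟨C₀, hC0, hxC0, hc.1, hC0sub⟩
    · obtain ⟨D, hD, hcD, hyD, hDsub⟩ := hcirc c y hcF hy hcy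
      obtain ⟨C, hC, hxC, hyC, hCsub⟩ :=
        circuit_connects hfin hC0 hD hxC0 hyD ⟨c, hc.1, hcD⟩
      exact ⟨C, hC, hxC, hyC, hCsub.trans (union_subset hC0sub hDsub)⟩
  refine ⟨⟨x, mem_insert _ _⟩, ?_⟩
  intro a b ha hb
  rcases eq_or_ne a b with rfl | hab
  · exact Or.inl ⟨rfl, ha⟩
  have ha' : a ∈ insert x F := ha
  have hb' : b ∈ insert x F := hb
  have hcc : ∃ C, M.IsCircuit' C ∧ a ∈ C ∧ b ∈ C ∧ C ⊆ insert x F := by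
    rcases mem_insert_iff.1 ha' with rfl | haF
    · have hbF : b ∈ F := by
        rcases mem_insert_iff.1 hb' with h | h
        · exact absurd h.symm hab
        · exact h
      obtain ⟨C, h1, h2, h3, h4⟩ := hkey b hbF
      exact ⟨C, h1, h2, h3, h4⟩
    rcases mem_insert_iff.1 hb' with rfl | hbF
    · obtain ⟨C, h1, h2, h3, h4⟩ := hkey a haF
      exact ⟨C, h1, h3, h2, h4⟩
    · exact hcirc a b haF hbF hab
  obtain ⟨C, hC, haC, hbC, hCsub⟩ := hcc
  exact Or.inr ⟨C, (restrict_circuit_iff hFE' hCsub).2 hC, haC, hbC⟩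

lemma not_connected_insert (hFne : F.Nonempty) (hxF : x ∉ F) (hFE' : insert x F ⊆ M.E)
    (hno : ∀ C, M.IsCircuit' C → C ⊆ insert x F → x ∉ C) :
    ¬ (M ↾ (insert x F)).IsConnected := by
  intro hconn
  obtain ⟨y, hy⟩ := hFne
  have h := hconn.2 (show x ∈ (M ↾ insert x F).E from mem_insert _ _)
    (show y ∈ (M ↾ insert x F).E from mem_insert_of_mem _ hy)
  rcases h with ⟨rfl, _⟩ | ⟨C, hC, hxC, hyC⟩
  · exact hxF hy
  · have hCsub : C ⊆ insert x F := hC.1.2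
    exact hno C ((restrict_circuit_iff hFE' hCsub).1 hC) hCsub hxC

lemma del_part (hfin : M.Finite) (hx : x ∈ M.E) (hxi : M.Indep {x})
    (hF : (M.del {x}).PncFlat F) : Xor' (M.PncFlat F) (M.PncFlat (F ∪ {x})) := by
  rw [union_singleton]
  obtain ⟨hflat, hss, hdep, hconn⟩ := hF
  have hFR : F ⊆ M.E \ {x} := hflat.subset_ground
  have hFE : F ⊆ M.E := hFR.trans diff_subset
  have hxF : x ∉ F := fun h => (hFR h).2 rfl
  have hMdep : M.Dep F := ⟨((restrict_dep_iff).1 hdep).1, hFE⟩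
  have hFne := dep_nonempty hMdep
  have hconnF : (M ↾ F).IsConnected := by
    have h := hconn
    rwa [show M.del {x} = M ↾ (M.E \ {x}) from rfl, restrict_restrict_eq M hFR] at h
  have hcirc : ∀ y z, y ∈ F → z ∈ F → y ≠ z →
      ∃ C, M.IsCircuit' C ∧ y ∈ C ∧ z ∈ C ∧ C ⊆ F := by
    intro y z hy hz hyz
    have h := hconnF.2 (show y ∈ (M ↾ F).E from hy) (show z ∈ (M ↾ F).E from hz)
    rcases h with ⟨h', _⟩ | ⟨C, hC, hyC, hzC⟩
    · exact absurd h' hyz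
    · have hCF : C ⊆ F := hC.1.2
      exact ⟨C, (restrict_circuit_iff hFE hCF).1 hC, hyC, hzC, hCF⟩
  have hclF : M.closure F ⊆ insert x F := by
    obtain ⟨I, hI⟩ := (M ↾ (M.E \ {x})).exists_isBasis F hFR
    have hIM : M.IsBasis I F := ((isBasis_restrict_iff diff_subset).1 hI).1
    intro e he
    rcases eq_or_ne e x with rfl | hex
    · exact mem_insert _ _
    refine mem_insert_of_mem _ ?_
    rw [← hIM.closure_eq_closure] at he
    rcases (hIM.indep.mem_closure_iff).1 he with hd | hmem
    · have heE : e ∈ M.E := hd.2 (mem_insert _ _)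
      have hd' : (M ↾ (M.E \ {x})).Dep (insert e I) :=
        restrict_dep_iff.2 ⟨hd.1, insert_subset ⟨heE, hex⟩ (hI.subset.trans hFR)⟩
      have hecl : e ∈ (M ↾ (M.E \ {x})).closure I := (hI.indep.insert_dep_iff.1 hd').1
      have hflat2 : (M ↾ (M.E \ {x})).IsFlat F := hflat
      rw [hI.closure_eq_closure, hflat2.closure] at hecl
      exact hecl
    · exact hIM.subset hmem
  by_cases hxcl : x ∈ M.closure F
  · -- F ∪ {x} is the pnc-flat
    right
    constructor
    · have hcleq : M.closure F = insert x F :=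
        subset_antisymm hclF (insert_subset hxcl (M.subset_closure F hFE))
      refine ⟨hcleq ▸ flat_closure M F, ?_, hMdep.superset (subset_insert _ _)
        (insert_subset hx hFE), ?_⟩
      · obtain ⟨z, hzR, hzF⟩ := exists_of_ssubset hss
        have hzR' : z ∈ M.E \ {x} := hzR
        refine Set.ssubset_iff_subset_ne.2 ⟨insert_subset hx hFE, fun h => ?_⟩
        have : z ∈ insert x F := h.symm ▸ hzR'.1
        rcases mem_insert_iff.1 this with rfl | h'
        · exact hzR'.2 rfl
        · exact hzF h'
      · refine connected_insert hfin hFE hx hxF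
          (fun y z hy hz hyz => ?_) ?_
        · obtain ⟨C, h1, h2, h3, h4⟩ := hcirc y z hy hz hyz
          exact ⟨C, h1, h2, h3, h4.trans (subset_insert _ _)⟩
        · obtain ⟨C₀, hC0, hxC0, hC0sub⟩ :=
            exists_circuit_of_mem_closure hfin hFE hxcl hxF
          refine ⟨C₀, hC0, hxC0, hC0sub, ?_⟩
          by_contra hcon
          rw [not_nonempty_iff_eq_empty, diff_eq_empty] at hcon
          have : C₀ = {x} := subset_antisymm hcon (singleton_subset_iff.2 hxC0)
          exact hC0.1.1 (this ▸ hxi)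
    · intro hPF
      have hcl : M.closure F = F := hPF.1.closure
      exact hxF (hcl ▸ hxcl)
  · -- F is the pnc-flat
    left
    constructor
    · refine ⟨?_, Set.ssubset_iff_subset_ne.2 ⟨hFE, fun h => hxF (h.symm ▸ hx)⟩,
        hMdep, hconnF⟩
      refine flat_of_closure_subset hFE (fun e he => ?_)
      rcases mem_insert_iff.1 (hclF he) with rfl | h
      · exact absurd he hxcl
      · exact h
    · intro hPF
      refine not_connected_insert hFne hxF (insert_subset hx hFE)
        (fun C hC hCsub hxC => ?_) hPF.2.2.2
      have hCdiff : C \ {x} ⊆ F := by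
        rintro a ⟨haC, hax⟩
        rcases mem_insert_iff.1 (hCsub haC) with h | h
        · exact absurd h hax
        · exact h
      exact hxcl (M.closure_subset_closure hCdiff (circuit_mem_closure_diff hC hxC))

lemma con_part (hfin : M.Finite) (hx : x ∈ M.E) (hxi : M.Indep {x})
    (hF : (M.con {x}).PncFlat F) : Xor' (M.PncFlat F) (M.PncFlat (F ∪ {x})) := by
  rw [union_singleton]
  obtain ⟨hflat, hss, hdep, hconn⟩ := hF
  have hFR : F ⊆ M.E \ {x} := hflat.subset_ground
  have hFE : F ⊆ M.E := hFR.trans diff_subset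
  have hxF : x ∉ F := fun h => (hFR h).2 rfl
  have hdep' := (con_dep_iff hx hxi).1 hdep
  have hMdep' : M.Dep (insert x F) := ⟨hdep'.1, insert_subset hx hFE⟩
  have hFne : F.Nonempty := dep_nonempty hdep
  have hconnF : ((M.con {x}) ↾ F).IsConnected := hconn
  have hflat' : M.IsFlat (insert x F) := con_flat_insert hx hxi hflat
  have hproper : insert x F ⊂ M.E := by
    obtain ⟨z, hzR, hzF⟩ := exists_of_ssubset hss
    have hzR' : z ∈ M.E \ {x} := hzR
    refine Set.ssubset_iff_subset_ne.2 ⟨insert_subset hx hFE, fun h => ?_⟩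
    have : z ∈ insert x F := h.symm ▸ hzR'.1
    rcases mem_insert_iff.1 this with rfl | h'
    · exact hzR'.2 rfl
    · exact hzF h'
  have hNlift : ∀ y z, y ∈ F → z ∈ F → y ≠ z →
      ∃ C, ((M.con {x}).IsCircuit' C ∧ y ∈ C ∧ z ∈ C ∧ C ⊆ F) := by
    intro y z hy hz hyz
    have h := hconnF.2 (show y ∈ ((M.con {x}) ↾ F).E from hy)
      (show z ∈ ((M.con {x}) ↾ F).E from hz)
    rcases h with ⟨h', _⟩ | ⟨C, hC, hyC, hzC⟩
    · exact absurd h' hyz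
    · have hCF : C ⊆ F := hC.1.2
      exact ⟨C, (restrict_circuit_iff hFR hCF).1 hC, hyC, hzC, hCF⟩
  by_cases hP : ∃ D, M.IsCircuit' D ∧ x ∈ D ∧ D ⊆ insert x F
  · right
    constructor
    · refine ⟨hflat', hproper, hMdep', ?_⟩
      obtain ⟨D, hD, hxD, hDsub⟩ := hP
      refine connected_insert hfin hFE hx hxF (fun y z hy hz hyz => ?_) ?_
      · obtain ⟨C, hC, hyC, hzC, hCF⟩ := hNlift y z hy hz hyz
        rcases con_circuit hfin hx hxi hC with h | h
        · exact ⟨C, h, hyC, hzC, hCF.trans (subset_insert _ _)⟩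
        · exact ⟨insert x C, h, mem_insert_of_mem _ hyC, mem_insert_of_mem _ hzC,
            insert_subset_insert hCF⟩
      · refine ⟨D, hD, hxD, hDsub, ?_⟩
        by_contra hcon
        rw [not_nonempty_iff_eq_empty, diff_eq_empty] at hcon
        have : D = {x} := subset_antisymm hcon (singleton_subset_iff.2 hxD)
        exact hD.1.1 (this ▸ hxi)
    · intro hPF
      obtain ⟨D, hD, hxD, hDsub⟩ := hP
      have hcl : M.closure F = F := hPF.1.closure
      have hDdiff : D \ {x} ⊆ F := by
        rintro a ⟨haD, hax⟩
        rcases mem_insert_iff.1 (hDsub haD) with h | h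
        · exact absurd h hax
        · exact h
      have : x ∈ M.closure F :=
        M.closure_subset_closure hDdiff (circuit_mem_closure_diff hD hxD)
      exact hxF (hcl ▸ this)
  · left
    have hlift : ∀ y z, y ∈ F → z ∈ F → y ≠ z →
        ∃ C, M.IsCircuit' C ∧ y ∈ C ∧ z ∈ C ∧ C ⊆ F := by
      intro y z hy hz hyz
      obtain ⟨C, hC, hyC, hzC, hCF⟩ := hNlift y z hy hz hyz
      rcases con_circuit hfin hx hxi hC with h | h
      · exact ⟨C, h, hyC, hzC, hCF⟩
      · exact absurd ⟨insert x C, h, mem_insert _ _, insert_subset_insert hCF⟩ hP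
    constructor
    · refine ⟨?_, Set.ssubset_iff_subset_ne.2 ⟨hFE, fun h => hxF (h.symm ▸ hx)⟩, ?_, ?_⟩
      · refine flat_of_closure_subset hFE (fun e he => ?_)
        rcases eq_or_ne e x with rfl | hex
        · obtain ⟨C, hC, heC, hCsub⟩ := exists_circuit_of_mem_closure hfin hFE he hxF
          exact absurd ⟨C, hC, heC, hCsub⟩ hP
        · have : e ∈ M.closure (insert x F) :=
            M.closure_subset_closure (subset_insert _ _) he
          rw [hflat'.closure] at this
          rcases mem_insert_iff.1 this with h | h
          · exact absurd h hex
          · exact h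
      · obtain ⟨D, hD, hDsub⟩ := exists_circuit_subset hfin hMdep'
        have hxD : x ∉ D := fun h => hP ⟨D, hD, h, hDsub⟩
        have hDF : D ⊆ F := by
          intro a ha
          rcases mem_insert_iff.1 (hDsub ha) with h | h
          · exact absurd (h ▸ ha) hxD
          · exact h
        exact hD.1.superset hDF hFE
      · refine ⟨hFne, ?_⟩
        intro a b ha hb
        rcases eq_or_ne a b with rfl | hab
        · exact Or.inl ⟨rfl, ha⟩
        have ha' : a ∈ F := ha
        have hb' : b ∈ F := hb
        obtain ⟨C, hC, haC, hbC, hCF⟩ := hlift a b ha' hb' hab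
        exact Or.inr ⟨C, (restrict_circuit_iff hFE hCF).2 hC, haC, hbC⟩
    · intro hPF
      refine not_connected_insert hFne hxF (insert_subset hx hFE)
        (fun C hC hCsub hxC => hP ⟨C, hC, hxC, hCsub⟩) hPF.2.2.2

end MatroidAux


section Statements

variable {α : Type*}

theorem pnc_flat_of_deletion_contraction
    (M : Matroid α) (hfin : M.Finite) (x : α) (hx : x ∈ M.E) (hl : ¬ M.IsLoop' x) :
    (∀ F : Set α, (M.del {x}).PncFlat F →
      Xor' (M.PncFlat F) (M.PncFlat (F ∪ {x}))) ∧
    (∀ F : Set α, (M.con {x}).PncFlat F →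
      Xor' (M.PncFlat F) (M.PncFlat (F ∪ {x}))) := by
  have hxi : M.Indep {x} := by
    by_contra h
    exact hl ⟨hx, h⟩
  exact ⟨fun F hF => MatroidAux.del_part hfin hx hxi hF,
    fun F hF => MatroidAux.con_part hfin hx hxi hF⟩

end Statements
end
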